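/- Let M > 0 and let π and ρ be probability measures on ℝ, each giving full mass to the set {x : |x| ≤ √M}, and suppose ε = KL(π‖ρ) < ∞. Then the variance gap satisfies |Var(π) − Var(ρ)| ≤ 4M·√ε. -/

import Mathlib

open MeasureTheory
open scoped Classical

/-- Kullback–Leibler divergence `KL(μ‖ν)`, valued in `EReal`:
`∫ log (dμ/dν) dμ` when `μ ≪ ν` and the integrand is `μ`-integrable, `⊤` otherwise. -/
noncomputable def klDiv {Ω : Type*} [MeasurableSpace Ω] (μ ν : Measure Ω) : EReal :=
  if μ ≪ ν ∧ Integrable (fun ω => Real.log (μ.rnDeriv ν ω).toReal) μ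
  then ((∫ ω, Real.log (μ.rnDeriv ν ω).toReal ∂μ : ℝ) : EReal)
  else ⊤

/-- Mean of a measure on `ℝ`. -/
noncomputable def meanM (μ : Measure ℝ) : ℝ := ∫ x, x ∂μ

/-- Variance of a measure on `ℝ`: `∫ x² dμ − (∫ x dμ)²`. -/
noncomputable def varM (μ : Measure ℝ) : ℝ := (∫ x, x ^ 2 ∂μ) - (∫ x, x ∂μ) ^ 2



private lemma hdG {y : ℝ} (hy : 0 < y) :
    HasDerivAt (fun y : ℝ => Real.log y - (y^2 - 1)/(2*y))
      (y⁻¹ - (2*y*(2*y) - (y^2-1)*2)/(2*y)^2) y := by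
  have h1 : HasDerivAt (fun y : ℝ => (y^2 - 1)/(2*y))
      ((2*y*(2*y) - (y^2-1)*2)/(2*y)^2) y := by
    have := ((hasDerivAt_pow 2 y).sub_const 1).div
      ((hasDerivAt_id y).const_mul 2) (by positivity)
    simpa [id_eq, Pi.div_def] using this
  exact (Real.hasDerivAt_log hy.ne').sub h1

private lemma hdF {y : ℝ} (hy : 0 < y) :
    HasDerivAt (fun y : ℝ => Real.log y - 2*(y-1)/(y+1))
      (y⁻¹ - (2*(y+1) - 2*(y-1))/(y+1)^2) y := by
  have h1 : HasDerivAt (fun y : ℝ => 2*(y-1)/(y+1))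
      ((2*(y+1) - 2*(y-1))/(y+1)^2) y := by
    have := (((hasDerivAt_id y).sub_const 1).const_mul 2).div
      ((hasDerivAt_id y).add_const 1) (by positivity)
    simpa [id_eq, Pi.div_def] using this
  exact (Real.hasDerivAt_log hy.ne').sub h1

lemma log_ge_low {x : ℝ} (hx : 0 < x) (hx1 : x ≤ 1) : (x^2 - 1)/(2*x) ≤ Real.log x := by
  have key : AntitoneOn (fun y : ℝ => Real.log y - (y^2 - 1)/(2*y)) (Set.Ioc 0 1) := by
    apply antitoneOn_of_deriv_nonpos (convex_Ioc 0 1)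
    · apply ContinuousOn.sub
      · exact Real.continuousOn_log.mono (fun y hy => ne_of_gt hy.1)
      · exact ContinuousOn.div (by fun_prop) (by fun_prop) (fun y hy => by have h0 := hy.1; positivity)
    · rw [interior_Ioc]
      intro y hy
      exact (hdG hy.1).differentiableAt.differentiableWithinAt
    · rw [interior_Ioc]
      intro y hy
      have hy0 := hy.1
      rw [(hdG hy0).deriv, sub_nonpos, inv_le_iff_one_le_mul₀ hy0, div_mul_eq_mul_div,
        le_div_iff₀ (by positivity)]
      nlinarith [sq_nonneg (y-1), sq_nonneg y, hy.2]
  have := key (Set.mem_Ioc.2 ⟨hx, hx1⟩) (Set.mem_Ioc.2 ⟨one_pos, le_refl 1⟩) hx1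
  simp only [Real.log_one] at this
  have h1 : ((1:ℝ)^2 - 1)/(2*1) = 0 := by norm_num
  rw [h1] at this
  linarith

lemma log_ge_high {x : ℝ} (hx : 1 ≤ x) : 2*(x-1)/(x+1) ≤ Real.log x := by
  have key : MonotoneOn (fun y : ℝ => Real.log y - 2*(y-1)/(y+1)) (Set.Ici 1) := by
    apply monotoneOn_of_deriv_nonneg (convex_Ici 1)
    · apply ContinuousOn.sub
      · exact Real.continuousOn_log.mono (fun y hy => by
          simp only [Set.mem_Ici] at hy
          simp only [Set.mem_compl_iff, Set.mem_singleton_iff]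
          intro h; rw [h] at hy; linarith)
      · exact ContinuousOn.div (by fun_prop) (by fun_prop)
          (fun y hy => by simp only [Set.mem_Ici] at hy; positivity)
    · rw [interior_Ici]
      intro y hy
      have hy0 : (0:ℝ) < y := lt_trans one_pos hy
      exact (hdF hy0).differentiableAt.differentiableWithinAt
    · rw [interior_Ici]
      intro y hy
      have hy1 : (1:ℝ) < y := hy
      have hy0 : (0:ℝ) < y := by linarith
      rw [(hdF hy0).deriv, sub_nonneg, div_le_iff₀ (by positivity : (0:ℝ) < (y+1)^2)]
      have hinv : y * y⁻¹ = 1 := mul_inv_cancel₀ hy0.ne'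
      nlinarith [sq_nonneg (y-1), mul_pos hy0 hy0, sq_nonneg (y*y⁻¹)]
  have := key (Set.mem_Ici.2 (le_refl 1)) (Set.mem_Ici.2 hx) hx
  simp only [Real.log_one] at this
  have h1 : 2*((1:ℝ)-1)/(1+1) = 0 := by norm_num
  rw [h1] at this
  linarith

lemma key_pointwise {x : ℝ} (hx : 0 ≤ x) :
    (x-1)^2 ≤ 2*(x+1)*(x*Real.log x - x + 1) := by
  rcases eq_or_lt_of_le hx with h0 | h0
  · simp [← h0]
  rcases le_or_gt x 1 with h1 | h1
  · have hb := log_ge_low h0 h1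
    have h2 : (x^2 - 1)/2 ≤ x * Real.log x := by
      have he : x * ((x^2-1)/(2*x)) = (x^2-1)/2 := by field_simp
      nlinarith [mul_le_mul_of_nonneg_left hb (le_of_lt h0)]
    nlinarith [sq_nonneg (x-1)]
  · have hb := log_ge_high h1.le
    have h2 : 2*x*(x-1)/(x+1) ≤ x * Real.log x := by
      have he : x * (2*(x-1)/(x+1)) = 2*x*(x-1)/(x+1) := by ring
      nlinarith [mul_le_mul_of_nonneg_left hb (by linarith : (0:ℝ) ≤ x)]
    have h3 : (0:ℝ) < x + 1 := by linarith
    have h4 : 2*x*(x-1)/(x+1) * (x+1) = 2*x*(x-1) := by field_simp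
    nlinarith [mul_le_mul_of_nonneg_right h2 h3.le, sq_nonneg (x-1)]

set_option maxHeartbeats 2000000 in
/-- If `π` and `ρ` are probability measures on `ℝ` supported in `{x : |x| ≤ √M}` with
`KL(π‖ρ) = ε < ∞`, then `|Var(π) − Var(ρ)| ≤ 4M√ε`. -/
theorem var_gap_le_of_klDiv_eq (M : ℝ) (hM : 0 < M) (π ρ : Measure ℝ)
    [IsProbabilityMeasure π] [IsProbabilityMeasure ρ]
    (hπ : π {x : ℝ | |x| ≤ Real.sqrt M} = 1)
    (hρ : ρ {x : ℝ | |x| ≤ Real.sqrt M} = 1)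
    (ε : ℝ) (hε : klDiv π ρ = (ε : EReal)) :
    |varM π - varM ρ| ≤ 4 * M * Real.sqrt ε := by
  classical
  by_cases hcond : π ≪ ρ ∧ Integrable (fun ω => Real.log (π.rnDeriv ρ ω).toReal) π
  swap
  · rw [klDiv, if_neg hcond] at hε
    exact absurd hε.symm (EReal.coe_ne_top ε)
  obtain ⟨hac, hint⟩ := hcond
  rw [klDiv, if_pos ⟨hac, hint⟩] at hε
  have hεeq : ∫ ω, Real.log (π.rnDeriv ρ ω).toReal ∂π = ε := by exact_mod_cast hε
  set g : ℝ → ℝ := fun x => (π.rnDeriv ρ x).toReal with hgdef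
  have hgm : Measurable g := (Measure.measurable_rnDeriv π ρ).ennreal_toReal
  have hg0 : ∀ x, 0 ≤ g x := fun x => ENNReal.toReal_nonneg
  have hgint : Integrable g ρ := Measure.integrable_toReal_rnDeriv
  have hg1 : ∫ x, g x ∂ρ = 1 := by
    rw [hgdef, Measure.integral_toReal_rnDeriv hac]; simp
  have hglog_int : Integrable (fun x => g x * Real.log (g x)) ρ := by
    have := (integrable_rnDeriv_smul_iff (ν := ρ)
      (f := fun x => Real.log (g x)) hac).mpr hint
    simpa [smul_eq_mul] using this
  have hKL : ∫ x, g x * Real.log (g x) ∂ρ = ε := by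
    have := integral_rnDeriv_smul (ν := ρ) (f := fun x => Real.log (g x)) hac
    simp only [smul_eq_mul] at this
    rw [this, hεeq]
  set φg : ℝ → ℝ := fun x => g x * Real.log (g x) - g x + 1 with hφdef
  have i1 : Integrable (fun x => g x * Real.log (g x) - g x) ρ := hglog_int.sub hgint
  have hφint : Integrable φg ρ := i1.add (integrable_const 1)
  have hφval : ∫ x, φg x ∂ρ = ε := by
    have : ∫ x, φg x ∂ρ = ∫ x, (g x * Real.log (g x) - g x) + 1 ∂ρ := rfl
    rw [this, integral_add i1 (integrable_const 1),
      integral_sub hglog_int hgint, hKL, hg1, integral_const]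
    simp
  have hkey : ∀ x, (g x - 1)^2 ≤ 2*(g x + 1)*(φg x) := fun x => key_pointwise (hg0 x)
  have hφ0 : ∀ x, 0 ≤ φg x := by
    intro x
    nlinarith [hkey x, sq_nonneg (g x - 1), hg0 x]
  have hε0 : 0 ≤ ε := hφval ▸ integral_nonneg hφ0
  have habs_int : Integrable (fun x => |g x - 1|) ρ := (hgint.sub (integrable_const 1)).abs
  have hstep : ∀ t : ℝ, 0 < t → (∫ x, |g x - 1| ∂ρ) ≤ ε/t + t := by
    intro t ht
    have habst : ∀ a s φ : ℝ, 0 ≤ a → 0 ≤ φ → 0 ≤ s → a^2 ≤ 2*s*φ →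
        a ≤ (1/t) * φ + (t/2) * s := by
      intro a s φ ha hφ hs hk
      rw [← mul_le_mul_iff_right₀ ht]
      have he : t * ((1/t) * φ + (t/2) * s) = φ + (t^2/2) * s := by field_simp
      rw [he]
      have h6 : 0 ≤ φ + t^2/2 * s := by positivity
      have h7 : 0 ≤ t * a := mul_nonneg ht.le ha
      have h5 : (t * a)^2 ≤ (φ + t^2/2 * s)^2 := by
        have h8 : t^2 * a^2 ≤ t^2 * (2*s*φ) := mul_le_mul_of_nonneg_left hk (sq_nonneg t)
        nlinarith [sq_nonneg (φ - t^2/2 * s), h8]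
      calc t * a = Real.sqrt ((t * a)^2) := (Real.sqrt_sq h7).symm
        _ ≤ Real.sqrt ((φ + t^2/2 * s)^2) := Real.sqrt_le_sqrt h5
        _ = φ + t^2/2 * s := Real.sqrt_sq h6
    have hpt : ∀ x, |g x - 1| ≤ (1/t) * φg x + (t/2) * (g x + 1) := by
      intro x
      refine habst _ _ _ (abs_nonneg _) (hφ0 x) (by linarith [hg0 x]) ?_
      rw [sq_abs]
      calc (g x - 1)^2 ≤ 2*(g x + 1)*(φg x) := hkey x
        _ = 2*(g x + 1)*(φg x) := rfl
    have i2 : Integrable (fun x => (1/t) * φg x) ρ := hφint.const_mul _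
    have i3 : Integrable (fun x => g x + 1) ρ := hgint.add (integrable_const 1)
    have i4 : Integrable (fun x => (t/2) * (g x + 1)) ρ := i3.const_mul _
    calc (∫ x, |g x - 1| ∂ρ) ≤ ∫ x, ((1/t) * φg x + (t/2) * (g x + 1)) ∂ρ :=
          integral_mono habs_int (i2.add i4) hpt
      _ = ε/t + t := by
          rw [integral_add i2 i4, integral_const_mul, integral_const_mul,
            integral_add hgint (integrable_const 1), hφval, hg1, integral_const]
          simp
          ring
  have hTV : (∫ x, |g x - 1| ∂ρ) ≤ 2 * Real.sqrt ε := by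
    rcases eq_or_lt_of_le hε0 with h | h
    · have h0 : (∫ x, |g x - 1| ∂ρ) ≤ 0 := by
        by_contra h'
        push_neg at h'
        have h2 := hstep ((∫ x, |g x - 1| ∂ρ) / 2) (by linarith)
        rw [← h, zero_div] at h2
        linarith
      calc (∫ x, |g x - 1| ∂ρ) ≤ 0 := h0
        _ ≤ 2 * Real.sqrt ε := by positivity
    · have hst := hstep (Real.sqrt ε) (Real.sqrt_pos.2 h)
      rw [Real.div_sqrt] at hst
      linarith
  -- generic bound for [0, 4M]-valued functions
  have hgen : ∀ h : ℝ → ℝ, Measurable h → (∀ x, 0 ≤ h x) → (∀ x, h x ≤ 4*M) →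
      |(∫ x, h x ∂π) - ∫ x, h x ∂ρ| ≤ 4 * M * Real.sqrt ε := by
    intro h hm h0 hb
    have hbnd : ∀ (μ : Measure ℝ) [IsProbabilityMeasure μ], Integrable h μ := by
      intro μ _
      refine (integrable_const (4*M)).mono' hm.aestronglyMeasurable ?_
      exact ae_of_all _ fun x => by
        rw [Real.norm_eq_abs, abs_of_nonneg (h0 x)]; exact hb x
    have hintρ : Integrable h ρ := hbnd ρ
    have hintπ : Integrable h π := hbnd π
    have hgh_int : Integrable (fun x => g x * h x) ρ := by
      have := (integrable_rnDeriv_smul_iff (ν := ρ) (f := h) hac).mpr hintπ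
      simpa [smul_eq_mul] using this
    have hchg : ∫ x, h x ∂π = ∫ x, g x * h x ∂ρ := by
      have := integral_rnDeriv_smul (ν := ρ) (f := h) hac
      simp only [smul_eq_mul] at this
      rw [this]
    have j1 : Integrable (fun x => g x * h x - h x) ρ := hgh_int.sub hintρ
    have j2 : Integrable (fun x => 2*M * g x) ρ := hgint.const_mul _
    have j3 : Integrable (fun x => g x * h x - h x - 2*M * g x) ρ := j1.sub j2
    have e1 : (∫ x, h x ∂π) - ∫ x, h x ∂ρ = ∫ x, (g x - 1) * (h x - 2*M) ∂ρ := by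
      have e2 : ∫ x, (g x - 1) * (h x - 2*M) ∂ρ
          = ∫ x, (g x * h x - h x - 2*M * g x) + 2*M ∂ρ := by
        congr 1; funext x; ring
      rw [hchg, e2, integral_add j3 (integrable_const _),
        integral_sub j1 j2, integral_sub hgh_int hintρ, integral_const_mul, hg1,
        integral_const]
      simp
    have hbd2 : ∀ x, |h x - 2*M| ≤ 2*M := by
      intro x
      rw [abs_le]
      exact ⟨by linarith [h0 x], by linarith [hb x]⟩
    have hprod_int : Integrable (fun x => (g x - 1) * (h x - 2*M)) ρ := by
      have := Integrable.bdd_mul (f := fun x => h x - 2*M) (g := fun x => g x - 1)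
        (hgint.sub (integrable_const 1)) (hm.sub_const (2*M)).aestronglyMeasurable
        (ae_of_all _ fun x => by rw [Real.norm_eq_abs]; exact hbd2 x)
      exact this.congr (ae_of_all _ fun x => by ring)
    have habs_int2 : Integrable (fun x => |g x - 1| * |h x - 2*M|) ρ :=
      hprod_int.abs.congr (ae_of_all _ fun x => abs_mul _ _)
    have e3 : |∫ x, (g x - 1) * (h x - 2*M) ∂ρ| ≤ ∫ x, |g x - 1| * |h x - 2*M| ∂ρ := by
      have := norm_integral_le_integral_norm (μ := ρ) (fun x => (g x - 1) * (h x - 2*M))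
      simpa [Real.norm_eq_abs, abs_mul] using this
    have e4 : (∫ x, |g x - 1| * |h x - 2*M| ∂ρ) ≤ ∫ x, |g x - 1| * (2*M) ∂ρ := by
      refine integral_mono habs_int2 (habs_int.mul_const _) ?_
      intro x
      exact mul_le_mul_of_nonneg_left (hbd2 x) (abs_nonneg _)
    have e5 : (∫ x, |g x - 1| * (2*M) ∂ρ) ≤ 2 * Real.sqrt ε * (2*M) := by
      rw [integral_mul_const]
      exact mul_le_mul_of_nonneg_right hTV (by positivity)
    rw [e1]
    calc |∫ x, (g x - 1) * (h x - 2*M) ∂ρ| ≤ ∫ x, |g x - 1| * |h x - 2*M| ∂ρ := e3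
      _ ≤ ∫ x, |g x - 1| * (2*M) ∂ρ := e4
      _ ≤ 2 * Real.sqrt ε * (2*M) := e5
      _ = 4 * M * Real.sqrt ε := by ring
  -- support facts
  set S : Set ℝ := {x : ℝ | |x| ≤ Real.sqrt M} with hSdef
  have hS : MeasurableSet S := measurableSet_le continuous_abs.measurable measurable_const
  have haes : ∀ (μ : Measure ℝ) [IsProbabilityMeasure μ], μ S = 1 → ∀ᵐ x ∂μ, x ∈ S := by
    intro μ _ hμS
    have hcompl : μ Sᶜ = 0 := by
      rw [measure_compl hS (measure_ne_top μ S), hμS, measure_univ]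
      simp
    exact (MeasureTheory.ae_iff).2 hcompl
  have haeπ : ∀ᵐ x ∂π, x ∈ S := haes π hπ
  have haeρ : ∀ᵐ x ∂ρ, x ∈ S := haes ρ hρ
  have hintegr : ∀ (μ : Measure ℝ) [IsProbabilityMeasure μ], (∀ᵐ x ∂μ, x ∈ S) →
      Integrable (fun x => x) μ ∧ Integrable (fun x => x^2) μ ∧ |∫ x, x ∂μ| ≤ Real.sqrt M := by
    intro μ _ hae
    have hid : Integrable (fun x : ℝ => x) μ := by
      refine (integrable_const (Real.sqrt M)).mono' aestronglyMeasurable_id ?_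
      filter_upwards [hae] with x hx
      have hx' : |x| ≤ Real.sqrt M := hx
      simpa [Real.norm_eq_abs] using hx'
    have hsq : Integrable (fun x : ℝ => x^2) μ := by
      refine (integrable_const M).mono' (by fun_prop) ?_
      filter_upwards [hae] with x hx
      have hax : |x| ≤ Real.sqrt M := hx
      rw [Real.norm_eq_abs, abs_of_nonneg (sq_nonneg x), ← sq_abs]
      calc |x|^2 ≤ (Real.sqrt M)^2 := pow_le_pow_left₀ (abs_nonneg x) hax 2
        _ = M := Real.sq_sqrt hM.le
    refine ⟨hid, hsq, ?_⟩
    calc |∫ x, x ∂μ| ≤ ∫ x, |x| ∂μ := by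
          simpa [Real.norm_eq_abs] using
            norm_integral_le_integral_norm (μ := μ) (fun x : ℝ => x)
      _ ≤ ∫ _x, Real.sqrt M ∂μ := by
          refine integral_mono_ae hid.abs (integrable_const _) ?_
          filter_upwards [hae] with x hx
          exact hx
      _ = Real.sqrt M := by simp
  obtain ⟨hidπ, hsqπ, hmπ⟩ := hintegr π haeπ
  obtain ⟨hidρ, hsqρ, hmρ⟩ := hintegr ρ haeρ
  have hexp : ∀ (μ : Measure ℝ) [IsProbabilityMeasure μ], Integrable (fun x : ℝ => x) μ →
      Integrable (fun x : ℝ => x^2) μ → ∀ c : ℝ,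
      ∫ x, (x - c)^2 ∂μ = ∫ x, x^2 ∂μ - 2*c*(∫ x, x ∂μ) + c^2 := by
    intro μ _ hid hsq c
    have k1 : Integrable (fun x : ℝ => (2*c)*x) μ := hid.const_mul _
    have k2 : Integrable (fun x : ℝ => x^2 - (2*c)*x) μ := hsq.sub k1
    have e2 : ∫ x, (x - c)^2 ∂μ = ∫ x, (x^2 - (2*c)*x) + c^2 ∂μ := by
      congr 1; funext x; ring
    rw [e2, integral_add k2 (integrable_const _), integral_sub hsq k1,
      integral_const_mul, integral_const]
    simp
  have hcenter : ∀ c : ℝ, |c| ≤ Real.sqrt M →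
      |(∫ x, (x - c)^2 ∂π) - ∫ x, (x - c)^2 ∂ρ| ≤ 4 * M * Real.sqrt ε := by
    intro c hc
    set h : ℝ → ℝ := S.indicator (fun x => (x - c)^2) with hhdef
    have hm : Measurable h := (((measurable_id.sub_const c).pow_const 2)).indicator hS
    have h0 : ∀ x, 0 ≤ h x := fun x => Set.indicator_nonneg (fun y _ => sq_nonneg _) x
    have hb : ∀ x, h x ≤ 4*M := by
      intro x
      rw [hhdef]
      by_cases hx : x ∈ S
      · rw [Set.indicator_of_mem hx]
        have hxa : |x| ≤ Real.sqrt M := hx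
        have h1 : |x - c| ≤ 2 * Real.sqrt M := by
          calc |x - c| ≤ |x| + |c| := abs_sub x c
            _ ≤ Real.sqrt M + Real.sqrt M := add_le_add hxa hc
            _ = 2 * Real.sqrt M := by ring
        calc (x - c)^2 = |x - c|^2 := (sq_abs _).symm
          _ ≤ (2 * Real.sqrt M)^2 := pow_le_pow_left₀ (abs_nonneg _) h1 2
          _ = 4 * M := by rw [mul_pow, Real.sq_sqrt hM.le]; norm_num
      · rw [Set.indicator_of_notMem hx]
        positivity
    have heqπ : ∫ x, h x ∂π = ∫ x, (x - c)^2 ∂π := by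
      refine integral_congr_ae ?_
      filter_upwards [haeπ] with x hx
      rw [hhdef, Set.indicator_of_mem hx]
    have heqρ : ∫ x, h x ∂ρ = ∫ x, (x - c)^2 ∂ρ := by
      refine integral_congr_ae ?_
      filter_upwards [haeρ] with x hx
      rw [hhdef, Set.indicator_of_mem hx]
    rw [← heqπ, ← heqρ]
    exact hgen h hm h0 hb
  have hd1 := hcenter (∫ x, x ∂ρ) hmρ
  have hd2 := hcenter (∫ x, x ∂π) hmπ
  rw [hexp π hidπ hsqπ _, hexp ρ hidρ hsqρ _, abs_le] at hd1
  rw [hexp π hidπ hsqπ _, hexp ρ hidρ hsqρ _, abs_le] at hd2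
  unfold varM
  rw [abs_le]
  have habst2 : ∀ Aπ Aρ mπ mρ B : ℝ,
      -B ≤ Aπ - 2*mπ*mπ + mπ^2 - (Aρ - 2*mπ*mρ + mπ^2) →
      Aπ - 2*mρ*mπ + mρ^2 - (Aρ - 2*mρ*mρ + mρ^2) ≤ B →
      -B ≤ Aπ - mπ^2 - (Aρ - mρ^2) ∧ Aπ - mπ^2 - (Aρ - mρ^2) ≤ B := by
    intro Aπ Aρ mπ mρ B k1 k2
    constructor <;> nlinarith [sq_nonneg (mπ - mρ)]
  exact habst2 _ _ _ _ _ hd2.1 hd1.2
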